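/- Let C ∈ ℂ, let Ω ⊆ ℂ² be a nonempty connected open set on which y ≠ 0, and let η : Ω → ℂ be a holomorphic function with η(x,y) ≠ 0 and ∂η/∂y ≠ 0 on Ω. Suppose that for all (x,y) ∈ Ω and all p ∈ ℂ: η_xx + 2p·η_xy + p²·η_yy + ((6y⁴ + x - 2p²)/(2y))·η_y = (6·η(x,y)⁴ + (x+C) - 2·(η_x + p·η_y)²)/(2·η(x,y)). Then C = 0 and there exists λ ∈ ℂ with λ² = 1 such that η(x,y) = λ·y for all (x,y) ∈ Ω. -/

import Mathlib

open Metric Set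


/-- Partial derivative in the first variable of a function `ℂ × ℂ → ℂ`. -/
noncomputable def cpX (η : ℂ × ℂ → ℂ) (q : ℂ × ℂ) : ℂ :=
  deriv (fun t => η (t, q.2)) q.1

/-- Partial derivative in the second variable of a function `ℂ × ℂ → ℂ`. -/
noncomputable def cpY (η : ℂ × ℂ → ℂ) (q : ℂ × ℂ) : ℂ :=
  deriv (fun t => η (q.1, t)) q.2

lemma const_of_hasDerivAt_zero {F : ℂ → ℂ} {s : Set ℂ} (hs : Convex ℝ s) (hso : IsOpen s)
    (h : ∀ t ∈ s, HasDerivAt F 0 t) {t₀ t₁ : ℂ} (h0 : t₀ ∈ s) (h1 : t₁ ∈ s) : F t₁ = F t₀ := by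
  apply hs.is_const_of_fderivWithin_eq_zero (𝕜 := ℂ)
    (fun t ht => ((h t ht).differentiableAt).differentiableWithinAt) _ h1 h0
  intro t ht
  rw [fderivWithin_of_isOpen hso ht, ((h t ht).hasFDerivAt).fderiv]
  ext; simp

lemma slice_struct {f : ℂ → ℂ} {V : Set ℂ} (hV : IsOpen V) (hconv : Convex ℝ V)
    (hf : DifferentiableOn ℂ f V) (h0 : ∀ t ∈ V, t ≠ 0)
    (hode : ∀ t ∈ V, t * (f t * deriv (deriv f) t) + t * (deriv f t)^2 = f t * deriv f t)
    {y₀ : ℂ} (hy₀ : y₀ ∈ V) :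
    ∀ t ∈ V, f t * deriv f t = (f y₀ * deriv f y₀ / y₀) * t ∧
      f t^2 = (f y₀ * deriv f y₀ / y₀) * t^2 + (f y₀^2 - (f y₀ * deriv f y₀ / y₀) * y₀^2) := by
  have ha : AnalyticOnNhd ℂ f V := hf.analyticOnNhd hV
  have hd : AnalyticOnNhd ℂ (deriv f) V := ha.deriv
  have Hf : ∀ t ∈ V, HasDerivAt f (deriv f t) t :=
    fun t ht => (hf.differentiableAt (hV.mem_nhds ht)).hasDerivAt
  have Hf' : ∀ t ∈ V, HasDerivAt (deriv f) (deriv (deriv f) t) t :=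
    fun t ht => ((hd t ht).differentiableAt).hasDerivAt
  set a := f y₀ * deriv f y₀ / y₀ with ha_def
  have fact1 : ∀ t ∈ V, f t * deriv f t = a * t := by
    have hF : ∀ t ∈ V, HasDerivAt (fun t => f t * deriv f t / t) 0 t := by
      intro t ht
      have h := (((Hf t ht).mul (Hf' t ht)).div (hasDerivAt_id t) (h0 t ht))
      refine h.congr_deriv (Eq.symm ?_)
      have := hode t ht
      rw [eq_comm, div_eq_zero_iff]
      left
      simp only [id, Pi.mul_apply]
      linear_combination this
    intro t ht
    have := const_of_hasDerivAt_zero hconv hV hF hy₀ ht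
    field_simp [h0 t ht, h0 y₀ hy₀] at this
    rw [ha_def]
    field_simp [h0 y₀ hy₀]
    linear_combination this
  intro t ht
  refine ⟨fact1 t ht, ?_⟩
  have hG : ∀ s ∈ V, HasDerivAt (fun s => f s^2 - a * s^2) 0 s := by
    intro s hs
    have h := ((Hf s hs).pow 2).sub ((hasDerivAt_pow 2 s).const_mul a)
    refine h.congr_deriv (Eq.symm ?_)
    have := fact1 s hs
    push_cast
    linear_combination (-2 : ℂ) * this
  have := const_of_hasDerivAt_zero hconv hV hG hy₀ ht
  linear_combination this

lemma deriv2_sq {h : ℂ → ℂ} {U : Set ℂ} (hU : IsOpen U) (hh : DifferentiableOn ℂ h U)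
    {x : ℂ} (hx : x ∈ U) :
    deriv (deriv (fun t => h t ^ 2)) x = 2 * (deriv h x)^2 + 2 * h x * deriv (deriv h) x := by
  have ha : AnalyticOnNhd ℂ h U := hh.analyticOnNhd hU
  have hd : AnalyticOnNhd ℂ (deriv h) U := ha.deriv
  have Hh : ∀ t ∈ U, HasDerivAt h (deriv h t) t :=
    fun t ht => (hh.differentiableAt (hU.mem_nhds ht)).hasDerivAt
  have Hd : ∀ t ∈ U, HasDerivAt (deriv h) (deriv (deriv h) t) t :=
    fun t ht => ((hd t ht).differentiableAt).hasDerivAt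
  have e1 : deriv (fun t => h t ^ 2) =ᶠ[nhds x] fun t => 2 * h t * deriv h t := by
    filter_upwards [hU.mem_nhds hx] with t ht
    rw [show deriv (fun t => h t ^ 2) t = deriv (h ^ 2) t from rfl, ((Hh t ht).pow 2).deriv]
    ring_nf
  rw [e1.deriv_eq]
  have h2 : HasDerivAt (fun t => 2 * h t * deriv h t)
      (2 * deriv h x * deriv h x + 2 * h x * deriv (deriv h) x) x :=
    ((Hh x hx).const_mul 2).mul (Hd x hx)
  rw [h2.deriv]; ring

lemma deriv2_affine {A B : ℂ → ℂ} {U : Set ℂ} (hU : IsOpen U) (hA : DifferentiableOn ℂ A U)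
    (hB : DifferentiableOn ℂ B U) {y : ℂ} {x : ℂ} (hx : x ∈ U) :
    deriv (deriv (fun t => A t * y ^ 2 + B t)) x
      = deriv (deriv A) x * y ^ 2 + deriv (deriv B) x := by
  have haA : AnalyticOnNhd ℂ A U := hA.analyticOnNhd hU
  have haB : AnalyticOnNhd ℂ B U := hB.analyticOnNhd hU
  have HA : ∀ t ∈ U, HasDerivAt A (deriv A t) t :=
    fun t ht => (hA.differentiableAt (hU.mem_nhds ht)).hasDerivAt
  have HB : ∀ t ∈ U, HasDerivAt B (deriv B t) t :=
    fun t ht => (hB.differentiableAt (hU.mem_nhds ht)).hasDerivAt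
  have HA' : ∀ t ∈ U, HasDerivAt (deriv A) (deriv (deriv A) t) t :=
    fun t ht => ((haA.deriv t ht).differentiableAt).hasDerivAt
  have HB' : ∀ t ∈ U, HasDerivAt (deriv B) (deriv (deriv B) t) t :=
    fun t ht => ((haB.deriv t ht).differentiableAt).hasDerivAt
  have e1 : deriv (fun t => A t * y ^ 2 + B t) =ᶠ[nhds x]
      fun t => deriv A t * y ^ 2 + deriv B t := by
    filter_upwards [hU.mem_nhds hx] with t ht
    exact (((HA t ht).mul_const (y ^ 2)).add (HB t ht)).deriv
  rw [e1.deriv_eq]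
  exact (((HA' x hx).mul_const (y ^ 2)).add (HB' x hx)).deriv

lemma deriv2_congr {f g : ℂ → ℂ} {U : Set ℂ} (hU : IsOpen U) (h : ∀ t ∈ U, f t = g t)
    {x : ℂ} (hx : x ∈ U) : deriv (deriv f) x = deriv (deriv g) x := by
  have h1 : ∀ t ∈ U, deriv f t = deriv g t := fun t ht =>
    Filter.EventuallyEq.deriv_eq (Filter.eventually_of_mem (hU.mem_nhds ht) h)
  exact Filter.EventuallyEq.deriv_eq (Filter.eventually_of_mem (hU.mem_nhds hx) h1)

lemma poly_coeffs {c4 c2 c0 : ℂ} {V : Set ℂ} (hV : IsOpen V) (hne : V.Nonempty)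
    (h : ∀ y ∈ V, c4 * y ^ 4 + c2 * y ^ 2 + c0 = 0) : c4 = 0 ∧ c2 = 0 ∧ c0 = 0 := by
  obtain ⟨z₀, hz₀⟩ := hne
  have hdiff : Differentiable ℂ (fun y : ℂ => c4 * y ^ 4 + c2 * y ^ 2 + c0) := by fun_prop
  have hψ : AnalyticOnNhd ℂ (fun y : ℂ => c4 * y ^ 4 + c2 * y ^ 2 + c0) univ :=
    Complex.analyticOnNhd_univ_iff_differentiable.2 hdiff
  have hzero : ∀ y : ℂ, c4 * y ^ 4 + c2 * y ^ 2 + c0 = 0 := by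
    have := hψ.eqOn_zero_of_preconnected_of_eventuallyEq_zero isPreconnected_univ
      (mem_univ z₀) (Filter.eventually_of_mem (hV.mem_nhds hz₀) h)
    intro y; exact this (mem_univ y)
  have e0 := hzero 0
  have e1 := hzero 1
  have e2 := hzero 2
  refine ⟨by linear_combination (e2 - 4 * e1 + 3 * e0) / 12,
    by linear_combination (-e2 + 16 * e1 - 15 * e0) / 12, by linear_combination e0⟩

/-- The Φ₃-symmetry pseudo-group of `y'' = (6y⁴ + x - 2(y')²)/(2y)` is
`{(x,y) ↦ (x, λy) : λ² = 1}`: any symmetry `x̄ = x + C`, `ȳ = η(x,y)` has `C = 0` and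
`η(x,y) = λ y` with `λ² = 1`. -/
theorem statement6 (C : ℂ) (Ω : Set (ℂ × ℂ)) (hΩo : IsOpen Ω) (hΩc : IsConnected Ω)
    (hy0 : ∀ q ∈ Ω, q.2 ≠ 0)
    (η : ℂ × ℂ → ℂ) (hη : DifferentiableOn ℂ η Ω)
    (hη0 : ∀ q ∈ Ω, η q ≠ 0) (hηy : ∀ q ∈ Ω, cpY η q ≠ 0)
    (hpde : ∀ q ∈ Ω, ∀ p : ℂ,
      cpX (cpX η) q + 2 * p * cpX (cpY η) q + p^2 * cpY (cpY η) q
        + ((6 * q.2^4 + q.1 - 2 * p^2) / (2 * q.2)) * cpY η q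
      = (6 * (η q)^4 + (q.1 + C) - 2 * (cpX η q + p * cpY η q)^2) / (2 * η q)) :
    C = 0 ∧ ∃ l : ℂ, l^2 = 1 ∧ ∀ q ∈ Ω, η q = l * q.2 := by
  -- pointwise coefficient equations
  have hE2 : ∀ q ∈ Ω, q.2 * (η q * cpY (cpY η) q) + q.2 * (cpY η q)^2 = η q * cpY η q := by
    intro q hq
    have h0 := hpde q hq 0
    have h1 := hpde q hq 1
    have hm := hpde q hq (-1)
    have hy := hy0 q hq
    have he := hη0 q hq
    field_simp at h0 h1 hm
    linear_combination (h1 + hm - 2 * h0) / 4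
  have hE0 : ∀ q ∈ Ω, q.2 * (2 * (cpX η q)^2 + 2 * η q * cpX (cpX η) q)
      + (6 * q.2^4 + q.1) * (η q * cpY η q) = q.2 * (6 * (η q)^4 + q.1 + C) := by
    intro q hq
    have h0 := hpde q hq 0
    have hy := hy0 q hq
    have he := hη0 q hq
    field_simp at h0
    linear_combination h0
  -- key local statement
  have key : ∀ q₀ ∈ Ω, C = 0 ∧ (η q₀)^2 = q₀.2^2 := by
    intro q₀ hq₀
    obtain ⟨r, hr, hball⟩ := Metric.isOpen_iff.1 hΩo q₀ hq₀
    set U : Set ℂ := ball q₀.1 r with hU_def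
    set V : Set ℂ := ball q₀.2 r with hV_def
    have hUopen : IsOpen U := isOpen_ball
    have hVopen : IsOpen V := isOpen_ball
    have hxU : q₀.1 ∈ U := mem_ball_self hr
    have hyV : q₀.2 ∈ V := mem_ball_self hr
    have hUV : U ×ˢ V ⊆ Ω := by
      rw [hU_def, hV_def, ball_prod_same, Prod.mk.eta]; exact hball
    have hmem : ∀ x ∈ U, ∀ t ∈ V, (x, t) ∈ Ω := fun x hx t ht => hUV (mk_mem_prod hx ht)
    -- slice differentiability
    have hfy : ∀ x ∈ U, DifferentiableOn ℂ (fun t => η (x, t)) V := by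
      intro x hx t ht
      exact ((hη.differentiableAt (hΩo.mem_nhds (hmem x hx t ht))).comp t
        ((differentiableAt_const x).prodMk differentiableAt_id)).differentiableWithinAt
    have hfx : ∀ y ∈ V, DifferentiableOn ℂ (fun t => η (t, y)) U := by
      intro y hy t ht
      exact ((hη.differentiableAt (hΩo.mem_nhds (hmem t ht y hy))).comp t
        (differentiableAt_id.prodMk (differentiableAt_const y))).differentiableWithinAt
    -- structure along y-slices
    have hstr : ∀ x ∈ U, ∀ t ∈ V,
        η (x, t) * deriv (fun s => η (x, s)) t
          = (η (x, q₀.2) * deriv (fun s => η (x, s)) q₀.2 / q₀.2) * t ∧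
        η (x, t)^2 = (η (x, q₀.2) * deriv (fun s => η (x, s)) q₀.2 / q₀.2) * t^2
          + (η (x, q₀.2)^2 - (η (x, q₀.2) * deriv (fun s => η (x, s)) q₀.2 / q₀.2) * q₀.2^2) := by
      intro x hx
      refine slice_struct hVopen (convex_ball _ _) (hfy x hx)
        (fun t ht => hy0 (x, t) (hmem x hx t ht)) ?_ hyV
      intro t ht
      exact hE2 (x, t) (hmem x hx t ht)
    -- choice of second point y₁
    obtain ⟨d, hd0, hdne, hdr⟩ : ∃ d : ℂ, d ≠ 0 ∧ d + 2 * q₀.2 ≠ 0 ∧ ‖d‖ < r := by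
      by_cases hc : ((r / 2 : ℝ) : ℂ) + 2 * q₀.2 = 0
      · refine ⟨((r / 4 : ℝ) : ℂ), ?_, ?_, ?_⟩
        · simp only [ne_eq, Complex.ofReal_eq_zero]; positivity
        · intro hcon
          have : ((r / 4 : ℝ) : ℂ) = ((r / 2 : ℝ) : ℂ) := by linear_combination hcon - hc
          rw [Complex.ofReal_inj] at this
          nlinarith
        · rw [Complex.norm_real, Real.norm_eq_abs, abs_of_pos (by positivity)]
          linarith
      · refine ⟨((r / 2 : ℝ) : ℂ), ?_, hc, ?_⟩
        · simp only [ne_eq, Complex.ofReal_eq_zero]; positivity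
        · rw [Complex.norm_real, Real.norm_eq_abs, abs_of_pos (by positivity)]
          linarith
    set y₁ : ℂ := q₀.2 + d with hy₁_def
    have hy₁V : y₁ ∈ V := by
      rw [hV_def, mem_ball, dist_eq_norm, hy₁_def, add_sub_cancel_left]
      exact hdr
    have hysq : y₁^2 - q₀.2^2 ≠ 0 := by
      have : y₁^2 - q₀.2^2 = d * (d + 2 * q₀.2) := by rw [hy₁_def]; ring
      rw [this]
      exact mul_ne_zero hd0 hdne
    -- holomorphic coefficient functions
    set A : ℂ → ℂ := fun t => (η (t, y₁)^2 - η (t, q₀.2)^2) / (y₁^2 - q₀.2^2) with hA_def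
    set Bf : ℂ → ℂ := fun t => η (t, q₀.2)^2 - A t * q₀.2^2 with hB_def
    have hAdiff : DifferentiableOn ℂ A U :=
      (((hfx y₁ hy₁V).pow 2).sub ((hfx q₀.2 hyV).pow 2)).div_const _
    have hBdiff : DifferentiableOn ℂ Bf U :=
      ((hfx q₀.2 hyV).pow 2).sub (hAdiff.mul_const _)
    have hAeq : ∀ x ∈ U, A x = η (x, q₀.2) * deriv (fun s => η (x, s)) q₀.2 / q₀.2 := by
      intro x hx
      have h₁ := (hstr x hx y₁ hy₁V).2
      rw [hA_def]
      rw [div_eq_iff hysq]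
      linear_combination h₁
    have fact2 : ∀ x ∈ U, ∀ t ∈ V, η (x, t)^2 = A x * t^2 + Bf x := by
      intro x hx t ht
      have h₂ := (hstr x hx t ht).2
      rw [hB_def]
      simp only
      rw [hAeq x hx]
      linear_combination h₂
    have fact1 : ∀ x ∈ U, ∀ t ∈ V, η (x, t) * deriv (fun s => η (x, s)) t = A x * t := by
      intro x hx t ht
      rw [hAeq x hx]
      exact (hstr x hx t ht).1
    clear_value A Bf
    -- the main identity on U × V
    have hmain : ∀ x ∈ U, ∀ y ∈ V,
        deriv (deriv A) x * y^2 + deriv (deriv Bf) x + (6 * y^4 + x) * A x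
          = 6 * (A x * y^2 + Bf x)^2 + x + C := by
      intro x hx y hy
      have hyne : y ≠ 0 := hy0 (x, y) (hmem x hx y hy)
      have h : y * (2 * (deriv (fun t => η (t, y)) x)^2
            + 2 * η (x, y) * deriv (deriv (fun t => η (t, y))) x)
          + (6 * y^4 + x) * (η (x, y) * deriv (fun s => η (x, s)) y)
          = y * (6 * (η (x, y))^4 + x + C) := hE0 (x, y) (hmem x hx y hy)
      have hd2a := deriv2_sq hUopen (hfx y hy) hx
      have hcongr := deriv2_congr hUopen (fun t ht => fact2 t ht y hy) hx
      have hd2b := deriv2_affine hUopen hAdiff hBdiff (y := y) hx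
      have hd2 : 2 * (deriv (fun t => η (t, y)) x)^2
          + 2 * η (x, y) * deriv (deriv (fun t => η (t, y))) x
          = deriv (deriv A) x * y^2 + deriv (deriv Bf) x := by
        rw [← hd2a, hcongr, hd2b]
      have hw := fact1 x hx y hy
      have f2 := fact2 x hx y hy
      apply mul_left_cancel₀ hyne
      linear_combination h - y * hd2 - (6 * y^4 + x) * hw
        + 6 * y * ((η (x, y))^2 + (A x * y^2 + Bf x)) * f2
    -- coefficient extraction
    have hcoef : ∀ x ∈ U, ((A x)^2 = A x) ∧ (deriv (deriv A) x = 12 * A x * Bf x) ∧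
        (deriv (deriv Bf) x = 6 * (Bf x)^2 + x + C - x * A x) := by
      intro x hx
      have hp := poly_coeffs (c4 := 6 * (A x)^2 - 6 * A x)
        (c2 := 12 * A x * Bf x - deriv (deriv A) x)
        (c0 := 6 * (Bf x)^2 + x + C - deriv (deriv Bf) x - x * A x)
        hVopen ⟨q₀.2, hyV⟩ ?_
      · obtain ⟨p4, p2, p0⟩ := hp
        refine ⟨by linear_combination p4 / 6, by linear_combination -p2, by linear_combination -p0⟩
      · intro y hy
        linear_combination -(hmain x hx y hy)
    -- A is identically 1 on U
    have hA01 : ∀ x ∈ U, A x = 0 ∨ A x = 1 := by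
      intro x hx
      have h := (hcoef x hx).1
      have : A x * (A x - 1) = 0 := by linear_combination h
      rcases mul_eq_zero.1 this with h' | h'
      · exact Or.inl h'
      · exact Or.inr (by linear_combination h')
    have hAx0 : A q₀.1 ≠ 0 := by
      rw [hAeq q₀.1 hxU]
      have h1 : η (q₀.1, q₀.2) = η q₀ := by rw [Prod.mk.eta]
      have h2 : deriv (fun s => η (q₀.1, s)) q₀.2 = cpY η q₀ := rfl
      rw [h1, h2]
      exact div_ne_zero (mul_ne_zero (hη0 q₀ hq₀) (hηy q₀ hq₀)) (hy0 q₀ hq₀)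
    have hA1 : ∀ x ∈ U, A x = 1 := by
      have hopen1 : IsOpen (U ∩ A ⁻¹' ball (0 : ℂ) (1/2)) :=
        hAdiff.continuousOn.isOpen_inter_preimage hUopen isOpen_ball
      have hopen2 : IsOpen (U ∩ A ⁻¹' ball (1 : ℂ) (1/2)) :=
        hAdiff.continuousOn.isOpen_inter_preimage hUopen isOpen_ball
      have hdisj : Disjoint (U ∩ A ⁻¹' ball (0 : ℂ) (1/2)) (U ∩ A ⁻¹' ball (1 : ℂ) (1/2)) := by
        rw [Set.disjoint_left]
        rintro z ⟨-, hz1⟩ ⟨-, hz2⟩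
        simp only [mem_preimage, mem_ball] at hz1 hz2
        rw [dist_eq_norm] at hz1 hz2
        have h3 : ‖(A z - 0) - (A z - 1)‖ = 1 := by
          have he : (A z - 0) - (A z - 1) = 1 := by ring
          rw [he, norm_one]
        have hle : (1 : ℝ) ≤ ‖A z - 0‖ + ‖A z - 1‖ := h3.symm.le.trans (norm_sub_le _ _)
        linarith
      have hcover : U ⊆ (U ∩ A ⁻¹' ball (0 : ℂ) (1/2)) ∪ (U ∩ A ⁻¹' ball (1 : ℂ) (1/2)) := by
        intro x hx
        rcases hA01 x hx with h | h
        · left; exact ⟨hx, by simp [mem_preimage, mem_ball, h]⟩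
        · right; exact ⟨hx, by simp [mem_preimage, mem_ball, h]⟩
      have hpre : IsPreconnected U := (convex_ball q₀.1 r).isPreconnected
      rcases hpre.subset_or_subset hopen1 hopen2 hdisj hcover with hcase | hcase
      · exfalso
        have := hcase hxU
        rcases hA01 q₀.1 hxU with h | h
        · exact hAx0 h
        · have := this.2
          simp only [mem_preimage, mem_ball, h] at this
          rw [dist_eq_norm] at this
          norm_num at this
      · intro x hx
        have := (hcase hx).2
        rcases hA01 x hx with h | h
        · simp only [mem_preimage, mem_ball, h] at this
          rw [dist_eq_norm] at this
          norm_num at this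
        · exact h
    -- second derivatives of constants vanish
    have hA'0 : ∀ x ∈ U, deriv A x = 0 := by
      intro x hx
      have he : A =ᶠ[nhds x] fun _ => (1 : ℂ) :=
        Filter.eventually_of_mem (hUopen.mem_nhds hx) hA1
      rw [he.deriv_eq, deriv_const]
    have hA''0 : deriv (deriv A) q₀.1 = 0 := by
      have he : deriv A =ᶠ[nhds q₀.1] fun _ => (0 : ℂ) :=
        Filter.eventually_of_mem (hUopen.mem_nhds hxU) hA'0
      rw [he.deriv_eq, deriv_const]
    have hB0 : ∀ x ∈ U, Bf x = 0 := by
      intro x hx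
      have h := (hcoef x hx).2.1
      have h2 : deriv (deriv A) x = 0 := by
        have he : deriv A =ᶠ[nhds x] fun _ => (0 : ℂ) :=
          Filter.eventually_of_mem (hUopen.mem_nhds hx) hA'0
        rw [he.deriv_eq, deriv_const]
      rw [h2, hA1 x hx] at h
      linear_combination -h / 12
    have hB''0 : deriv (deriv Bf) q₀.1 = 0 := by
      have hB'0 : ∀ x ∈ U, deriv Bf x = 0 := by
        intro x hx
        have he : Bf =ᶠ[nhds x] fun _ => (0 : ℂ) :=
          Filter.eventually_of_mem (hUopen.mem_nhds hx) hB0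
        rw [he.deriv_eq, deriv_const]
      have he : deriv Bf =ᶠ[nhds q₀.1] fun _ => (0 : ℂ) :=
        Filter.eventually_of_mem (hUopen.mem_nhds hxU) hB'0
      rw [he.deriv_eq, deriv_const]
    -- conclude
    have hCeq := (hcoef q₀.1 hxU).2.2
    rw [hB''0, hB0 q₀.1 hxU, hA1 q₀.1 hxU] at hCeq
    have hC : C = 0 := by linear_combination -hCeq
    refine ⟨hC, ?_⟩
    have := fact2 q₀.1 hxU q₀.2 hyV
    rw [hA1 q₀.1 hxU, hB0 q₀.1 hxU, Prod.mk.eta] at this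
    linear_combination this
  -- global conclusion
  obtain ⟨⟨q₁, hq₁⟩, hpc⟩ := hΩc
  refine ⟨(key q₁ hq₁).1, ?_⟩
  have hsq : ∀ q ∈ Ω, (η q)^2 = q.2^2 := fun q hq => (key q hq).2
  set φ : ℂ × ℂ → ℂ := fun q => η q / q.2 with hφ_def
  have hφval : ∀ q ∈ Ω, φ q = 1 ∨ φ q = -1 := by
    intro q hq
    have h := hsq q hq
    have hy := hy0 q hq
    have : (φ q - 1) * (φ q + 1) = 0 := by
      rw [hφ_def]
      field_simp
      linear_combination h
    rcases mul_eq_zero.1 this with h' | h'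
    · exact Or.inl (by linear_combination h')
    · exact Or.inr (by linear_combination h')
  have hφc : ContinuousOn φ Ω :=
    (hη.continuousOn).div continuous_snd.continuousOn hy0
  have hopen1 : IsOpen (Ω ∩ φ ⁻¹' ball (1 : ℂ) 1) :=
    hφc.isOpen_inter_preimage hΩo isOpen_ball
  have hopen2 : IsOpen (Ω ∩ φ ⁻¹' ball (-1 : ℂ) 1) :=
    hφc.isOpen_inter_preimage hΩo isOpen_ball
  have hdisj : Disjoint (Ω ∩ φ ⁻¹' ball (1 : ℂ) 1) (Ω ∩ φ ⁻¹' ball (-1 : ℂ) 1) := by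
    rw [Set.disjoint_left]
    rintro z ⟨-, hz1⟩ ⟨-, hz2⟩
    simp only [mem_preimage, mem_ball] at hz1 hz2
    rw [dist_eq_norm] at hz1 hz2
    have h3 : ‖(φ z - (-1)) - (φ z - 1)‖ = 2 := by
      have he : (φ z - (-1)) - (φ z - 1) = 2 := by ring
      rw [he]
      norm_num
    have hle : (2 : ℝ) ≤ ‖φ z - (-1)‖ + ‖φ z - 1‖ := h3.symm.le.trans (norm_sub_le _ _)
    linarith
  have hcover : Ω ⊆ (Ω ∩ φ ⁻¹' ball (1 : ℂ) 1) ∪ (Ω ∩ φ ⁻¹' ball (-1 : ℂ) 1) := by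
    intro q hq
    rcases hφval q hq with h | h
    · left; exact ⟨hq, by simp [mem_preimage, mem_ball, h]⟩
    · right; exact ⟨hq, by simp [mem_preimage, mem_ball, h]⟩
  have hfin : ∀ (l : ℂ), (∀ q ∈ Ω, φ q = l) → (∀ q ∈ Ω, η q = l * q.2) := by
    intro l hl q hq
    have h2 : η q / q.2 = l := hl q hq
    rw [div_eq_iff (hy0 q hq)] at h2
    exact h2
  rcases hpc.subset_or_subset hopen1 hopen2 hdisj hcover with hcase | hcase
  · refine ⟨1, by norm_num, hfin 1 ?_⟩
    intro q hq
    have h := (hcase hq).2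
    rcases hφval q hq with h' | h'
    · exact h'
    · exfalso
      simp only [mem_preimage, mem_ball, h'] at h
      rw [dist_eq_norm] at h
      norm_num at h
  · refine ⟨-1, by norm_num, hfin (-1) ?_⟩
    intro q hq
    have h := (hcase hq).2
    rcases hφval q hq with h' | h'
    · exfalso
      simp only [mem_preimage, mem_ball, h'] at h
      rw [dist_eq_norm] at h
      norm_num at h
    · exact h'
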